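/- Let i_x = ⌊n x/(x+1)⌋. There exist a constant C > 0 and N such that for all n ≥ N and all real x with (log n)/(6n) ≤ x ≤ 1, one has | C(n, i_x)^2 x^{2 i_x} · 2π n x / (x+1)^{2n+2} − 1 | ≤ C / i_x; that is, C(n,i_x)^2 x^{2 i_x} = (1 + O(i_x^{−1})) (x+1)^{2n+2}/(2π n x) uniformly on this range. -/

import Mathlib

open Real
open Filter

set_option maxHeartbeats 1000000

/-- `i_x = ⌊n x/(x+1)⌋`. -/
noncomputable def idx (n : ℕ) (x : ℝ) : ℕ := ⌊(n : ℝ) * x / (x + 1)⌋₊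


lemma stirling_mono {a b : ℕ} (ha : 1 ≤ a) (hab : a ≤ b) :
    Stirling.stirlingSeq b ≤ Stirling.stirlingSeq a := by
  obtain ⟨a', rfl⟩ := Nat.exists_eq_add_of_le ha
  obtain ⟨b', rfl⟩ := Nat.exists_eq_add_of_le hab
  have := Stirling.stirlingSeq'_antitone (Nat.le_add_right a' b')
  simpa [Function.comp, Nat.succ_eq_add_one, Nat.add_comm, Nat.add_assoc, Nat.add_left_comm]
    using this

lemma sqrt_pi_le_stirlingSeq {k : ℕ} (hk : 1 ≤ k) : Real.sqrt π ≤ Stirling.stirlingSeq k := by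
  refine le_of_tendsto Stirling.tendsto_stirlingSeq_sqrt_pi ?_
  filter_upwards [eventually_ge_atTop k] with m hm
  exact stirling_mono hk hm

lemma stirlingSeq_pos' {j : ℕ} (hj : 1 ≤ j) : 0 < Stirling.stirlingSeq j := by
  obtain ⟨j', rfl⟩ := Nat.exists_eq_add_of_le hj
  simpa [Nat.add_comm] using Stirling.stirlingSeq'_pos j'

lemma stirlingSeq_le {k : ℕ} (hk : 1 ≤ k) :
    Stirling.stirlingSeq k ≤ Real.sqrt π * Real.exp (1 / k) := by
  have key : ∀ m : ℕ, Real.log (Stirling.stirlingSeq k) -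
      Real.log (Stirling.stirlingSeq (m + k)) ≤ 1 / (2 * k) := by
    have key2 : ∀ m : ℕ, Real.log (Stirling.stirlingSeq k) -
        Real.log (Stirling.stirlingSeq (m + k)) ≤ 1 / (2 * k) - 1 / (2 * ((m:ℝ) + k)) := by
      intro m
      induction m with
      | zero => simp
      | succ m ih =>
        have hstep := Stirling.log_stirlingSeq_sub_log_stirlingSeq_succ (m + k)
        have hkm : m + k - 1 + 1 = m + k := by omega
        have hkm2 : m + k - 1 + 2 = m + 1 + k := by omega
        rw [show m + k + 1 = m + 1 + k by omega] at hstep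
        have h1 : (1:ℝ) ≤ ((m + k : ℕ) : ℝ) := by
          exact_mod_cast Nat.one_le_iff_ne_zero.mpr (by omega)
        have h2 : (1:ℝ) / (4 * ((m + k : ℕ) : ℝ) ^ 2) ≤
            1 / (2 * ((m:ℝ) + k)) - 1 / (2 * (((m:ℝ) + 1) + k)) := by
          have e1 : ((m + k : ℕ) : ℝ) = (m:ℝ) + k := by push_cast; ring
          rw [e1] at h1 ⊢
          rw [div_sub_div _ _ (by positivity) (by positivity),
            div_le_div_iff₀ (by positivity) (by positivity)]
          nlinarith
        have := add_le_add ih (hstep.trans h2)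
        have e2 : ((m + 1 : ℕ) : ℝ) = (m:ℝ) + 1 := by push_cast; ring
        rw [e2]
        linarith
    intro m
    refine (key2 m).trans ?_
    have : 0 ≤ 1 / (2 * ((m:ℝ) + k)) := by positivity
    linarith
  have hlim : Tendsto (fun m : ℕ => Real.log (Stirling.stirlingSeq k) -
      Real.log (Stirling.stirlingSeq (m + k))) atTop
      (nhds (Real.log (Stirling.stirlingSeq k) - Real.log (Real.sqrt π))) := by
    refine tendsto_const_nhds.sub ?_
    exact ((Real.continuousAt_log (by positivity)).tendsto.comp
      (Stirling.tendsto_stirlingSeq_sqrt_pi.comp (tendsto_add_atTop_nat k)))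
  have hle : Real.log (Stirling.stirlingSeq k) - Real.log (Real.sqrt π) ≤ 1 / (2 * k) :=
    le_of_tendsto hlim (Eventually.of_forall key)
  have hkR : (0:ℝ) < k := by exact_mod_cast hk
  have h2 : (1:ℝ) / (2 * k) ≤ 1 / k := by
    rw [div_le_div_iff₀ (by positivity) hkR]; nlinarith
  have := Real.exp_le_exp.mpr (by linarith [hle.trans h2] :
    Real.log (Stirling.stirlingSeq k) ≤ Real.log (Real.sqrt π) + 1 / k)
  rwa [Real.exp_log (stirlingSeq_pos' hk), Real.exp_add, Real.exp_log (by positivity)] at this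


lemma fact_sq (m : ℕ) (hm : 1 ≤ m) :
    ((Nat.factorial m : ℕ) : ℝ)^2 = (Stirling.stirlingSeq m)^2 * (2*(m:ℝ)) * ((m:ℝ)/Real.exp 1)^(2*m) := by
  have hm0 : (0:ℝ) < m := by exact_mod_cast hm
  have h1 : ((Nat.factorial m : ℕ) : ℝ) = Stirling.stirlingSeq m * (Real.sqrt (2*m) * ((m:ℝ)/Real.exp 1)^m) := by
    rw [Stirling.stirlingSeq]
    field_simp
  rw [h1]
  rw [mul_pow, mul_pow, Real.sq_sqrt (by positivity), ← pow_mul]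
  ring

lemma key_identity (n i j : ℕ) (x : ℝ) (hx : 0 < x) (hi : 1 ≤ i) (hj : 1 ≤ j)
    (hn : n = i + j) :
    (n.choose i : ℝ)^2 * x^(2*i) * (2*π*(n:ℝ)*x) / (x+1)^(2*n+2)
    = (π * (Stirling.stirlingSeq n)^2 /
        ((Stirling.stirlingSeq i)^2 * (Stirling.stirlingSeq j)^2))
      * ((((n:ℝ)*x/(x+1)) * ((n:ℝ)/(x+1))) / ((i:ℝ)*(j:ℝ)))
      * ((((n:ℝ)*x/(x+1))/(i:ℝ))^i * (((n:ℝ)/(x+1))/(j:ℝ))^j)^2 := by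
  have hiR : (0:ℝ) < i := by exact_mod_cast hi
  have hjR : (0:ℝ) < j := by exact_mod_cast hj
  have hnn : 1 ≤ n := by omega
  have hnR : (0:ℝ) < n := by exact_mod_cast hnn
  have hin : i ≤ n := by omega
  have hx1 : (0:ℝ) < x + 1 := by linarith
  have hsn := Stirling.stirlingSeq'_pos (n-1)
  have hsi := Stirling.stirlingSeq'_pos (i-1)
  have hsj := Stirling.stirlingSeq'_pos (j-1)
  rw [show n - 1 + 1 = n by omega] at hsn
  rw [show i - 1 + 1 = i by omega] at hsi
  rw [show j - 1 + 1 = j by omega] at hsj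
  have hchoose : (n.choose i : ℝ) = (Nat.factorial n : ℕ) / ((Nat.factorial i : ℕ) * (Nat.factorial (n-i) : ℕ)) :=
    Nat.cast_choose ℝ hin
  rw [show n - i = j by omega] at hchoose
  rw [hchoose, div_pow, mul_pow, fact_sq n hnn, fact_sq i hi, fact_sq j hj,
    show 2*n+2 = 2*i+(2*j+2) by omega, show 2*n = 2*i+2*j by omega]
  rw [pow_add, pow_add, pow_add]
  have he : Real.exp 1 ≠ 0 := (Real.exp_pos 1).ne'
  have e1 : ((n:ℝ)*x/(x+1)/(i:ℝ))^i = (n:ℝ)^i * x^i / ((x+1)^i * (i:ℝ)^i) := by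
    rw [div_div, div_pow, mul_pow, mul_pow]
  have e2 : ((n:ℝ)/(x+1)/(j:ℝ))^j = (n:ℝ)^j / ((x+1)^j * (j:ℝ)^j) := by
    rw [div_div, div_pow, mul_pow]
  have e3 : ∀ m : ℕ, ((n:ℝ)/Real.exp 1)^(2*m) = (n:ℝ)^(2*m) / (Real.exp 1)^(2*m) :=
    fun m => div_pow _ _ _
  have e4 : ((i:ℝ)/Real.exp 1)^(2*i) = (i:ℝ)^(2*i) / (Real.exp 1)^(2*i) := div_pow _ _ _
  have e5 : ((j:ℝ)/Real.exp 1)^(2*j) = (j:ℝ)^(2*j) / (Real.exp 1)^(2*j) := div_pow _ _ _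
  rw [e1, e2, e3, e4, e5]
  field_simp
  ring_nf; field_simp; rw [← mul_pow, mul_one_div_cancel he, one_pow]

lemma exp_sq (y : ℝ) : Real.exp y ^ 2 = Real.exp (2 * y) := by
  rw [← Real.exp_nat_mul]; norm_num

lemma final_bound (T i : ℝ) (hi : 165 ≤ i) (h1 : Real.exp (-(8/i)) ≤ T)
    (h2 : T ≤ Real.exp (10/i)) : |T - 1| ≤ 100 / i := by
  have hi0 : (0:ℝ) < i := by linarith
  have hu0 : (0:ℝ) < 10/i := by positivity
  have hu2 : (10:ℝ)/i ≤ 1/2 := by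
    rw [div_le_div_iff₀ hi0 (by norm_num : (0:ℝ) < 2)]; linarith
  have hz : Real.exp (10/i) * (1 - 10/i) ≤ 1 := by
    have h := Real.add_one_le_exp (-(10/i))
    calc Real.exp (10/i) * (1 - 10/i) ≤ Real.exp (10/i) * Real.exp (-(10/i)) :=
          mul_le_mul_of_nonneg_left (by linarith) (Real.exp_pos _).le
      _ = 1 := by rw [← Real.exp_add]; simp
  have hzc : Real.exp (10/i) ≤ 1 + 10*(10/i) := by
    nlinarith [(Real.exp_pos (10/i)).le,
      mul_nonneg (by linarith : (0:ℝ) ≤ 1/2 - 10/i) (Real.exp_pos (10/i)).le]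
  have h100 : 10*((10:ℝ)/i) = 100/i := by ring
  rw [abs_le]
  constructor
  · have hl := Real.add_one_le_exp (-(8/i))
    have h8 : (8:ℝ)/i ≤ 100/i := by
      rw [div_le_div_iff₀ hi0 hi0]; nlinarith
    linarith
  · linarith

/-- uniformly for `(log n)/(6n) ≤ x ≤ 1`,
`C(n,i_x)^2 x^{2 i_x} = (1 + O(i_x^{-1})) (x+1)^{2n+2}/(2π n x)`. -/
theorem stmt_19 :
    ∃ C : ℝ, 0 < C ∧ ∃ N : ℕ, ∀ n : ℕ, N ≤ n → ∀ x : ℝ,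
      Real.log n / (6 * n) ≤ x → x ≤ 1 →
      |(n.choose (idx n x) : ℝ) ^ 2 * x ^ (2 * idx n x) * (2 * π * n * x) /
            (x + 1) ^ (2 * n + 2) - 1| ≤
        C / (idx n x : ℝ) := by
  refine ⟨100, by norm_num, ⌈Real.exp 2000⌉₊ + 1, fun n hn x hxl hxu => ?_⟩
  have hN : Real.exp 2000 ≤ (n:ℝ) := by
    calc Real.exp 2000 ≤ (⌈Real.exp 2000⌉₊ : ℝ) := Nat.le_ceil _
      _ ≤ n := by exact_mod_cast Nat.le_of_succ_le hn
  have hn1 : 1 ≤ n := le_trans (by omega) hn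
  have hnR : (0:ℝ) < n := by exact_mod_cast hn1
  have hnR1 : (1:ℝ) ≤ n := by exact_mod_cast hn1
  have hlog : (2000:ℝ) ≤ Real.log n := by
    rw [Real.le_log_iff_exp_le hnR]; exact hN
  have hx0 : 0 < x := lt_of_lt_of_le (by positivity) hxl
  have hx1 : (0:ℝ) < x + 1 := by linarith
  have hx2 : x + 1 ≤ 2 := by linarith
  -- definitions
  set i : ℕ := idx n x with hi_def
  set a : ℝ := (n:ℝ) * x / (x + 1) with ha_def
  have ha0 : 0 ≤ a := by positivity
  have hia : (i:ℝ) ≤ a := Nat.floor_le ha0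
  have hai : a < (i:ℝ) + 1 := Nat.lt_floor_add_one a
  have hx1' : x + 1 ≠ 0 := ne_of_gt hx1
  have hax : a * (x+1) = n * x := by rw [ha_def]; field_simp
  have hnx : Real.log n / 6 ≤ (n:ℝ) * x := by
    have h := mul_le_mul_of_nonneg_left hxl (le_of_lt hnR)
    have e : (n:ℝ) * (Real.log n / (6*n)) = Real.log n / 6 := by field_simp
    linarith [e ▸ h]
  have h2a : (n:ℝ) * x ≤ 2 * a := by
    nlinarith only [hax, mul_nonneg ha0 (show (0:ℝ) ≤ 2 - (x+1) by linarith)]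
  have ha_lb : (166:ℝ) ≤ a := by linarith only [h2a, hnx, hlog]
  have hi165 : (165:ℝ) ≤ (i:ℝ) := by linarith only [hai, ha_lb]
  have hiR : (0:ℝ) < i := by linarith only [hi165]
  have hi1 : 1 ≤ i := by exact_mod_cast (by linarith : (1:ℝ) ≤ (i:ℝ))
  have ha_half : a ≤ (n:ℝ)/2 := by
    rw [ha_def, div_le_div_iff₀ hx1 (by norm_num : (0:ℝ) < 2)]
    nlinarith only [mul_le_mul_of_nonneg_left hxu hnR.le]
  have hn332 : (332:ℝ) ≤ (n:ℝ) := by linarith only [ha_lb, ha_half]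
  have hin : i ≤ n := by
    have : (i:ℝ) ≤ (n:ℝ) := by linarith only [hia, ha_half, hnR]
    exact_mod_cast this
  set j : ℕ := n - i with hj_def
  have hnij : n = i + j := by omega
  have hj_cast : (j:ℝ) = (n:ℝ) - i := by
    rw [hj_def]; push_cast [hin]; ring
  have hj_lb : (n:ℝ)/2 ≤ (j:ℝ) := by rw [hj_cast]; linarith only [hia, ha_half]
  have hjR : (0:ℝ) < j := by linarith only [hj_lb, hn332]
  have hj1 : 1 ≤ j := by
    exact_mod_cast (by linarith only [hj_lb, hn332] : (1:ℝ) ≤ (j:ℝ))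
  have hij : (i:ℝ) ≤ j := by linarith only [hia, ha_half, hj_lb]
  set b : ℝ := (n:ℝ) / (x+1) with hb_def
  have hb : b = (n:ℝ) - a := by
    rw [hb_def, ha_def, eq_sub_iff_add_eq, ← add_div]
    rw [div_eq_iff hx1']; ring
  have hb_lb : (n:ℝ)/2 ≤ b := by rw [hb]; linarith only [ha_half]
  have hb_le : b ≤ n := by rw [hb]; linarith only [ha0]
  have hb_pos : (0:ℝ) < b := by linarith only [hb_lb, hn332]
  have ha_pos : (0:ℝ) < a := by linarith only [ha_lb]
  have hib : (i:ℝ) ≤ b := by linarith only [hia, ha_half, hb_lb]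
  -- key identity
  have hkey := key_identity n i j x hx0 hi1 hj1 hnij
  rw [← ha_def, ← hb_def] at hkey
  rw [hkey]
  -- stirling bounds
  have hsn_l := sqrt_pi_le_stirlingSeq (k := n) hn1
  have hsn_u := stirlingSeq_le (k := n) hn1
  have hsi_l := sqrt_pi_le_stirlingSeq (k := i) hi1
  have hsi_u := stirlingSeq_le (k := i) hi1
  have hsj_l := sqrt_pi_le_stirlingSeq (k := j) hj1
  have hsj_u := stirlingSeq_le (k := j) hj1
  have hπ : (0:ℝ) < π := Real.pi_pos
  have hsqπ : (0:ℝ) < Real.sqrt π := Real.sqrt_pos.mpr hπ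
  have hsn_pos : 0 < Stirling.stirlingSeq n := lt_of_lt_of_le hsqπ hsn_l
  have hsi_pos : 0 < Stirling.stirlingSeq i := lt_of_lt_of_le hsqπ hsi_l
  have hsj_pos : 0 < Stirling.stirlingSeq j := lt_of_lt_of_le hsqπ hsj_l
  set sn := Stirling.stirlingSeq n
  set si := Stirling.stirlingSeq i
  set sj := Stirling.stirlingSeq j
  -- F1 bounds
  have hsq : ∀ s : ℝ, ∀ k : ℕ, (0:ℝ) < k → 0 < s → s ≤ Real.sqrt π * Real.exp (1/k) →
      s^2 ≤ π * Real.exp (2/(k:ℝ)) := by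
    intro s k hk hs hsu
    calc s^2 ≤ (Real.sqrt π * Real.exp (1/k))^2 := by
          apply pow_le_pow_left₀ hs.le hsu
      _ = π * Real.exp (2/(k:ℝ)) := by
          rw [mul_pow, Real.sq_sqrt hπ.le, exp_sq]
          congr 2
          ring
  have hsq_l : ∀ s : ℝ, Real.sqrt π ≤ s → π ≤ s^2 := by
    intro s hs
    calc π = Real.sqrt π ^ 2 := (Real.sq_sqrt hπ.le).symm
      _ ≤ s^2 := by apply pow_le_pow_left₀ hsqπ.le hs
  have hF1_up : π * sn^2 / (si^2 * sj^2) ≤ Real.exp (2/(i:ℝ)) := by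
    have h1 : π * sn^2 ≤ π * (π * Real.exp (2/(n:ℝ))) :=
      mul_le_mul_of_nonneg_left (hsq sn n hnR hsn_pos hsn_u) hπ.le
    have h2 : π * π ≤ si^2 * sj^2 :=
      mul_le_mul (hsq_l si hsi_l) (hsq_l sj hsj_l) hπ.le (by positivity)
    calc π * sn^2 / (si^2 * sj^2) ≤ π * (π * Real.exp (2/(n:ℝ))) / (π * π) :=
          div_le_div₀ (by positivity) h1 (by positivity) h2
      _ = Real.exp (2/(n:ℝ)) := by field_simp
      _ ≤ Real.exp (2/(i:ℝ)) := by
          apply Real.exp_le_exp.mpr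
          exact div_le_div_of_nonneg_left (by norm_num) hiR
            (by linarith only [hia, ha_half, hj_lb, hj_cast])
  have hF1_lo : Real.exp (-(4/(i:ℝ))) ≤ π * sn^2 / (si^2 * sj^2) := by
    have h1 : π * π ≤ π * sn^2 := mul_le_mul_of_nonneg_left (hsq_l sn hsn_l) hπ.le
    have h2 : si^2 * sj^2 ≤ (π * Real.exp (2/(i:ℝ))) * (π * Real.exp (2/(j:ℝ))) :=
      mul_le_mul (hsq si i hiR hsi_pos hsi_u) (hsq sj j hjR hsj_pos hsj_u)
        (by positivity) (by positivity)
    have h3 : Real.exp (-(4/(i:ℝ))) ≤ π * π / ((π * Real.exp (2/(i:ℝ))) * (π * Real.exp (2/(j:ℝ)))) := by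
      have e : π * π / ((π * Real.exp (2/(i:ℝ))) * (π * Real.exp (2/(j:ℝ))))
          = Real.exp (-(2/(i:ℝ) + 2/(j:ℝ))) := by
        rw [Real.exp_neg, Real.exp_add]
        field_simp
      rw [e]
      apply Real.exp_le_exp.mpr
      have hji : 2/(j:ℝ) ≤ 2/(i:ℝ) := div_le_div_of_nonneg_left (by norm_num) hiR hij
      have e2 : (4:ℝ)/(i:ℝ) = 2/(i:ℝ) + 2/(i:ℝ) := by ring
      linarith only [hji, e2]
    calc Real.exp (-(4/(i:ℝ))) ≤ π * π / ((π * Real.exp (2/(i:ℝ))) * (π * Real.exp (2/(j:ℝ)))) := h3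
      _ ≤ π * sn^2 / (si^2 * sj^2) := div_le_div₀ (by positivity) h1 (by positivity) h2
  -- F2 bounds
  have hjb : (j:ℝ) = b + (a - i) := by rw [hj_cast, hb]; ring
  have hδ0 : (0:ℝ) ≤ a - i := by linarith only [hia]
  have hδ1 : a - (i:ℝ) < 1 := by linarith only [hai]
  have hib' : (0:ℝ) ≤ b - i := by linarith only [hib]
  have habij : a * b - (i:ℝ)*j = (a - i) * (b - i) := by rw [hjb]; ring
  have hprod_lo : (0:ℝ) ≤ (a - i) * (b - i) := mul_nonneg hδ0 hib'
  have hprod_up : (a - i) * (b - i) ≤ b - i := by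
    have h := mul_le_mul_of_nonneg_right hδ1.le hib'
    linarith only [h]
  have hF2_lo : (1:ℝ) ≤ a * b / ((i:ℝ) * j) := by
    rw [le_div_iff₀ (by positivity)]
    linarith only [habij, hprod_lo]
  have hF2_up : a * b / ((i:ℝ) * j) ≤ Real.exp (8/(i:ℝ)) := by
    have h1 : a * b ≤ (i:ℝ) * j * (1 + 8/(i:ℝ)) := by
      have e : (i:ℝ) * j * (1 + 8/(i:ℝ)) = (i:ℝ)*j + 8*j := by
        field_simp
      rw [e]
      linarith only [habij, hprod_up, hb_le, hj_lb, hjR, hiR]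
    calc a * b / ((i:ℝ) * j) ≤ 1 + 8/(i:ℝ) := by
          rw [div_le_iff₀ (by positivity)]; linarith only [h1]
      _ ≤ Real.exp (8/(i:ℝ)) := by
          have := Real.add_one_le_exp (8/(i:ℝ)); linarith
  -- E bounds
  set E : ℝ := (a/(i:ℝ))^i * (b/(j:ℝ))^j with hE_def
  have hE_pos : 0 < E := by positivity
  have hlogE : Real.log E = (i:ℝ) * Real.log (a/(i:ℝ)) + (j:ℝ) * Real.log (b/(j:ℝ)) := by
    rw [hE_def, Real.log_mul (by positivity) (by positivity), Real.log_pow, Real.log_pow]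
  have habn : a + b = (n:ℝ) := by rw [hb]; ring
  have hE_up : E ≤ 1 := by
    have h1 : Real.log (a/(i:ℝ)) ≤ a/(i:ℝ) - 1 := Real.log_le_sub_one_of_pos (by positivity)
    have h2 : Real.log (b/(j:ℝ)) ≤ b/(j:ℝ) - 1 := Real.log_le_sub_one_of_pos (by positivity)
    have h3 : Real.log E ≤ 0 := by
      rw [hlogE]
      have e1 : (i:ℝ) * (a/(i:ℝ) - 1) = a - i := by field_simp
      have e2 : (j:ℝ) * (b/(j:ℝ) - 1) = b - j := by field_simp
      have hm1 := mul_le_mul_of_nonneg_left h1 hiR.le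
      have hm2 := mul_le_mul_of_nonneg_left h2 hjR.le
      have hsum : (i:ℝ) + (j:ℝ) = a + b := by rw [hj_cast, ← habn]; ring
      linarith only [hm1, hm2, e1, e2, hsum]
    calc E = Real.exp (Real.log E) := (Real.exp_log hE_pos).symm
      _ ≤ Real.exp 0 := Real.exp_le_exp.mpr h3
      _ = 1 := Real.exp_zero
  have hE_lo : Real.exp (-(2/(i:ℝ))) ≤ E := by
    have h1 : 1 - (i:ℝ)/a ≤ Real.log (a/(i:ℝ)) := by
      have := Real.one_sub_inv_le_log_of_pos (show (0:ℝ) < a/(i:ℝ) by positivity)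
      rwa [inv_div] at this
    have h2 : 1 - (j:ℝ)/b ≤ Real.log (b/(j:ℝ)) := by
      have := Real.one_sub_inv_le_log_of_pos (show (0:ℝ) < b/(j:ℝ) by positivity)
      rwa [inv_div] at this
    have hsq1 : (a-(i:ℝ))^2 ≤ 1 := by
      calc (a-(i:ℝ))^2 ≤ 1^2 := pow_le_pow_left₀ hδ0 hδ1.le 2
        _ = 1 := one_pow 2
    have hA : (a - i) - 1/(i:ℝ) ≤ (i:ℝ) * (1 - (i:ℝ)/a) := by
      have e : (i:ℝ) * (1 - (i:ℝ)/a) - ((a - i) - 1/(i:ℝ)) = 1/(i:ℝ) - (a-i)^2/a := by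
        field_simp
        ring
      have h4 : (a-i)^2/a ≤ 1/(i:ℝ) := div_le_div₀ (by norm_num) hsq1 hiR hia
      linarith only [e, h4]
    have hB : -(a - i) - 1/(i:ℝ) ≤ (j:ℝ) * (1 - (j:ℝ)/b) := by
      have e : (j:ℝ) * (1 - (j:ℝ)/b) - (-(a - i) - 1/(i:ℝ)) = 1/(i:ℝ) - (a-i)^2/b := by
        rw [hjb]
        field_simp
        ring
      have h4 : (a-i)^2/b ≤ 1/(i:ℝ) := div_le_div₀ (by norm_num) hsq1 hiR hib
      linarith only [e, h4]
    have h3 : -(2/(i:ℝ)) ≤ Real.log E := by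
      rw [hlogE]
      have hmA := mul_le_mul_of_nonneg_left h1 hiR.le
      have hmB := mul_le_mul_of_nonneg_left h2 hjR.le
      have e2 : -(2/(i:ℝ)) = ((a - i) - 1/(i:ℝ)) + (-(a - i) - 1/(i:ℝ)) := by ring
      linarith only [hmA, hmB, hA, hB, e2]
    calc Real.exp (-(2/(i:ℝ))) ≤ Real.exp (Real.log E) := Real.exp_le_exp.mpr h3
      _ = E := Real.exp_log hE_pos
  -- combine
  have hEsq_up : E^2 ≤ 1 := pow_le_one₀ hE_pos.le hE_up
  have hEsq_lo : Real.exp (-(4/(i:ℝ))) ≤ E^2 := by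
    calc Real.exp (-(4/(i:ℝ))) = Real.exp (-(2/(i:ℝ)))^2 := by
          rw [exp_sq]; congr 1; ring
      _ ≤ E^2 := pow_le_pow_left₀ (Real.exp_pos _).le hE_lo 2
  have hF1_pos : (0:ℝ) < π * sn^2 / (si^2 * sj^2) := by positivity
  have hF2_pos : (0:ℝ) < a * b / ((i:ℝ) * j) := by positivity
  refine final_bound _ _ hi165 ?_ ?_
  · calc Real.exp (-(8/(i:ℝ)))
        = Real.exp (-(4/(i:ℝ))) * 1 * Real.exp (-(4/(i:ℝ))) := by
          rw [mul_one, ← Real.exp_add]; congr 1; ring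
      _ ≤ (π * sn^2 / (si^2 * sj^2)) * (a * b / ((i:ℝ) * j)) * E^2 := by
          apply mul_le_mul
          · apply mul_le_mul hF1_lo hF2_lo (by norm_num) hF1_pos.le
          · exact hEsq_lo
          · positivity
          · positivity
  · calc (π * sn^2 / (si^2 * sj^2)) * (a * b / ((i:ℝ) * j)) * E^2
        ≤ Real.exp (2/(i:ℝ)) * Real.exp (8/(i:ℝ)) * 1 := by
          apply mul_le_mul
          · apply mul_le_mul hF1_up hF2_up hF2_pos.le (Real.exp_pos _).le
          · exact hEsq_up
          · positivity
          · positivity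
      _ = Real.exp (10/(i:ℝ)) := by
          rw [mul_one, ← Real.exp_add]; congr 1; ring
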